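/- Let p be an odd prime, b a positive integer, and f(X) = X + Σ_{i≥1} a_i X^{i+b} ∈ F_p[[X]]. Define Δ_1 = f - X, Δ_{m+1} = Δ_m∘f - Δ_m, and write Δ_m = Σ_{n≥1} A_{n,m} X^{bm+n}. Then the first b+1 coefficients satisfy the matrix recurrence: A_{j,m+1} = Σ_{k=1}^{j} a_{j-k+1}(bm+k) A_{k,m} for 1 ≤ j ≤ b, and A_{b+1,m+1} = (a₁²·C(bm+1,2) + a_{b+1}(bm+1))A_{1,m} + Σ_{k=2}^{b+1} a_{b+2-k}(bm+k) A_{k,m}, with initial conditions A_{n,1} = a_n for 1 ≤ n ≤ b+1. -/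

import Mathlib

/-- Composition `f ∘ g` of formal power series (intended for `g` with zero constant term). -/
noncomputable def PowerSeries.comp {R : Type*} [CommRing R] (f g : PowerSeries R) :
    PowerSeries R :=
  PowerSeries.mk fun n =>
    PowerSeries.coeff (R := R) n (Polynomial.eval₂ (PowerSeries.C (R := R)) g (PowerSeries.trunc (n + 1) f))

open PowerSeries Finset in
lemma aux_coeff_pow_eq_zero {R : Type*} [CommRing R] {g : PowerSeries R} {c : ℕ}
    (hg : ∀ j < c, PowerSeries.coeff (R := R) j g = 0) :
    ∀ s M, M < s * c → PowerSeries.coeff (R := R) M (g ^ s) = 0 := by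
  intro s
  induction s with
  | zero => intro M hM; simp at hM
  | succ s ih =>
    intro M hM
    rw [pow_succ, PowerSeries.coeff_mul]
    apply Finset.sum_eq_zero
    rintro ⟨i, j⟩ hij
    rw [Finset.HasAntidiagonal.mem_antidiagonal] at hij
    by_cases hj : j < c
    · rw [hg j hj, mul_zero]
    · have hsc : (s+1) * c = s * c + c := Nat.succ_mul s c
      rw [ih i (by omega), zero_mul]

open PowerSeries Finset in
lemma aux_coeff_sq {R : Type*} [CommRing R] {g : PowerSeries R} {b : ℕ}
    (hg : ∀ j ≤ b, PowerSeries.coeff (R := R) j g = 0) :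
    PowerSeries.coeff (R := R) (2*b+2) (g^2) = (PowerSeries.coeff (R := R) (b+1) g)^2 := by
  rw [sq, PowerSeries.coeff_mul, Finset.sum_eq_single ((b+1), (b+1))]
  · rw [sq]
  · rintro ⟨i, j⟩ hij hne
    rw [Finset.HasAntidiagonal.mem_antidiagonal] at hij
    by_cases hi : i ≤ b
    · rw [hg i hi, zero_mul]
    · have hj : j ≤ b := by
        rcases Nat.lt_or_ge i (b+2) with h | h
        · exfalso; apply hne
          have : i = b + 1 := by omega
          subst this
          have : j = b + 1 := by omega
          subst this; rfl
        · omega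
      rw [hg j hj, mul_zero]
  · intro h
    exact absurd (Finset.HasAntidiagonal.mem_antidiagonal.2 (by ring)) h

open PowerSeries Finset in
lemma aux_coeff_pow_main {R : Type*} [CommRing R] {g : PowerSeries R} {b : ℕ} (hb : 1 ≤ b)
    (hg : ∀ j ≤ b, PowerSeries.coeff (R := R) j g = 0)
    (n N : ℕ) (hn : 1 ≤ n) (hnN : n ≤ N) (hN : N ≤ n + 2 * b) :
    PowerSeries.coeff (R := R) N ((PowerSeries.X + g) ^ n)
      = (if N = n then 1 else 0)
        + (n : R) * PowerSeries.coeff (R := R) (N - n + 1) g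
        + (if N = n + 2 * b then (n.choose 2 : R) * (PowerSeries.coeff (R := R) (b+1) g)^2 else 0) := by
  have hzero : ∀ s M, M < s * (b+1) → PowerSeries.coeff (R := R) M (g ^ s) = 0 :=
    aux_coeff_pow_eq_zero (fun j hj => hg j (by omega))
  rw [add_comm, add_pow, map_sum]
  set F : ℕ → R := fun k => PowerSeries.coeff (R := R) N (g ^ k * PowerSeries.X ^ (n - k) * (n.choose k : PowerSeries R)) with hF
  have hterm : ∀ k, F k
      = (n.choose k : R) * (if n - k ≤ N then PowerSeries.coeff (R := R) (N - (n-k)) (g^k) else 0) := by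
    intro k
    rw [hF]
    simp only []
    rw [← map_natCast (PowerSeries.C (R := R)) (n.choose k), mul_comm,
      PowerSeries.coeff_C_mul, PowerSeries.coeff_mul_X_pow']
  have hbig : ∀ k, n < k → F k = 0 := by
    intro k hk
    rw [hterm, Nat.choose_eq_zero_of_lt hk, Nat.cast_zero, zero_mul]
  have h3 : ∀ k, 3 ≤ k → F k = 0 := by
    intro k hk
    rw [hterm]
    by_cases h : n - k ≤ N
    · rw [if_pos h, hzero k (N - (n-k)) ?_, mul_zero]
      have h1 : 3 * b ≤ k * b := Nat.mul_le_mul_right b hk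
      have h2 : k * (b+1) = k * b + k := by ring
      omega
    · rw [if_neg h, mul_zero]
  have e1 : ∑ k ∈ Finset.range (n+1), F k = ∑ k ∈ Finset.range (n+3), F k :=
    Finset.sum_subset (Finset.range_subset_range.2 (by omega))
      (fun x hx hx' => hbig x (by simp only [Finset.mem_range] at hx hx'; omega))
  have e2 : ∑ k ∈ Finset.range 3, F k = ∑ k ∈ Finset.range (n+3), F k :=
    Finset.sum_subset (Finset.range_subset_range.2 (by omega))
      (fun x hx hx' => h3 x (by simp only [Finset.mem_range] at hx hx'; omega))
  have hsplit : ∑ k ∈ Finset.range (n+1), F k = ∑ k ∈ Finset.range 3, F k := e1.trans e2.symm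
  rw [hsplit]
  rw [Finset.sum_range_succ, Finset.sum_range_succ, Finset.sum_range_one]
  have hF0 : F 0 = if N = n then 1 else 0 := by
    rw [hterm, Nat.choose_zero_right, Nat.cast_one, one_mul, if_pos (by omega : n - 0 ≤ N)]
    rw [pow_zero, PowerSeries.coeff_one]
    by_cases h : N = n
    · rw [if_pos (show N - (n - 0) = 0 by omega), if_pos h]
    · rw [if_neg (show ¬ (N - (n - 0) = 0) by omega), if_neg h]
  have hF1 : F 1 = (n : R) * PowerSeries.coeff (R := R) (N - n + 1) g := by
    rw [hterm, Nat.choose_one_right, if_pos (by omega : n - 1 ≤ N), pow_one,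
      show N - (n - 1) = N - n + 1 by omega]
  have hF2 : F 2 = if N = n + 2 * b then (n.choose 2 : R) * (PowerSeries.coeff (R := R) (b+1) g)^2 else 0 := by
    rcases Nat.lt_or_ge n 2 with h2 | h2
    · have : n = 1 := by omega
      subst this
      rw [hterm]
      norm_num
    · rw [hterm, if_pos (by omega : n - 2 ≤ N)]
      by_cases h : N = n + 2 * b
      · rw [if_pos h]
        have : N - (n - 2) = 2 * b + 2 := by omega
        rw [this, aux_coeff_sq hg]
      · rw [if_neg h, hzero 2 (N - (n-2)) (by omega), mul_zero]
  rw [hF0, hF1, hF2]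

open PowerSeries Finset in
lemma aux_coeff_comp {R : Type*} [CommRing R] (F f : PowerSeries R) (N : ℕ) :
    PowerSeries.coeff (R := R) N (F.comp f)
      = ∑ n ∈ Finset.range (N+1), PowerSeries.coeff (R := R) n F * PowerSeries.coeff (R := R) N (f ^ n) := by
  rw [PowerSeries.comp, PowerSeries.coeff_mk,
    Polynomial.eval₂_eq_sum_range' (PowerSeries.C (R := R)) (PowerSeries.natDegree_trunc_lt F N) f,
    map_sum]
  apply Finset.sum_congr rfl
  intro i hi
  rw [PowerSeries.coeff_trunc, if_pos (Finset.mem_range.1 hi), PowerSeries.coeff_C_mul]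

open PowerSeries Finset in
lemma aux_master {R : Type*} [CommRing R] {b : ℕ} (hb : 1 ≤ b) {g D : PowerSeries R}
    (hg : ∀ j ≤ b, PowerSeries.coeff (R := R) j g = 0) {m : ℕ}
    (hD : ∀ i ≤ b*m, PowerSeries.coeff (R := R) i D = 0)
    (N : ℕ) (hN : N ≤ b*m + 1 + 2*b) :
    PowerSeries.coeff (R := R) N (D.comp (PowerSeries.X + g) - D)
      = ∑ k ∈ Finset.Icc 1 (N - b*m),
          PowerSeries.coeff (R := R) (b*m+k) D * ((b*m+k : ℕ) : R)
            * PowerSeries.coeff (R := R) (N - (b*m+k) + 1) g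
        + (if N = b*m + 1 + 2*b
            then ((b*m+1).choose 2 : R) * (PowerSeries.coeff (R := R) (b+1) g)^2
                  * PowerSeries.coeff (R := R) (b*m+1) D
            else 0) := by
  rw [map_sub, aux_coeff_comp]
  have hsub : ∑ n ∈ Finset.range (N+1), coeff (R := R) n D * coeff (R := R) N ((X+g) ^ n)
      = ∑ n ∈ Finset.Icc (b*m+1) N, coeff (R := R) n D * coeff (R := R) N ((X+g) ^ n) := by
    symm
    apply Finset.sum_subset
    · intro x hx; rw [Finset.mem_Icc] at hx; exact Finset.mem_range.2 (by omega)
    · intro x hx hx'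
      rw [Finset.mem_range] at hx
      rw [Finset.mem_Icc] at hx'
      rw [hD x (by omega), zero_mul]
  have hset : Finset.Icc (b*m+1) N
      = Finset.map (addLeftEmbedding (b*m)) (Finset.Icc 1 (N - b*m)) := by
    rw [Finset.map_add_left_Icc]
    rcases le_or_gt (b*m) N with h | h
    · congr 1; omega
    · rw [Finset.Icc_eq_empty (by omega), Finset.Icc_eq_empty (by omega)]
  rw [hsub, hset, Finset.sum_map]
  simp only [addLeftEmbedding_apply]
  have hpow : ∀ k ∈ Finset.Icc 1 (N - b*m),
      coeff (R := R) (b*m+k) D * coeff (R := R) N ((X+g) ^ (b*m+k))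
      = coeff (R := R) (b*m+k) D * (if N = b*m+k then 1 else 0)
        + coeff (R := R) (b*m+k) D * (((b*m+k : ℕ) : R) * coeff (R := R) (N - (b*m+k) + 1) g)
        + coeff (R := R) (b*m+k) D * (if N = (b*m+k) + 2*b
            then (((b*m+k).choose 2 : ℕ) : R) * (coeff (R := R) (b+1) g)^2 else 0) := by
    intro k hk
    rw [Finset.mem_Icc] at hk
    rw [aux_coeff_pow_main hb hg (b*m+k) N (by omega) (by omega) (by omega)]
    ring
  rw [Finset.sum_congr rfl hpow]
  rw [Finset.sum_add_distrib, Finset.sum_add_distrib]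
  have hS1 : ∑ k ∈ Finset.Icc 1 (N - b*m),
      coeff (R := R) (b*m+k) D * (if N = b*m+k then 1 else 0) = coeff (R := R) N D := by
    by_cases hc : b*m + 1 ≤ N
    · rw [Finset.sum_eq_single_of_mem (N - b*m) (Finset.mem_Icc.2 ⟨by omega, le_refl _⟩)]
      · rw [if_pos (show N = b*m + (N - b*m) by omega), mul_one,
          show b*m + (N - b*m) = N by omega]
      · intro k hk hne
        rw [Finset.mem_Icc] at hk
        rw [if_neg (by omega), mul_zero]
    · rw [show N - b*m = 0 by omega, Finset.Icc_eq_empty (by omega), Finset.sum_empty,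
        hD N (by omega)]
  have hS3 : ∑ k ∈ Finset.Icc 1 (N - b*m),
      coeff (R := R) (b*m+k) D * (if N = (b*m+k) + 2*b
          then (((b*m+k).choose 2 : ℕ) : R) * (coeff (R := R) (b+1) g)^2 else 0)
      = (if N = b*m + 1 + 2*b
          then ((b*m+1).choose 2 : R) * (coeff (R := R) (b+1) g)^2 * coeff (R := R) (b*m+1) D
          else 0) := by
    by_cases h : N = b*m + 1 + 2*b
    · rw [if_pos h, Finset.sum_eq_single_of_mem 1 (Finset.mem_Icc.2 ⟨le_refl 1, by omega⟩)]
      · rw [if_pos (by omega : N = (b*m+1) + 2*b)]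
        ring
      · intro k hk hne
        rw [Finset.mem_Icc] at hk
        rw [if_neg (by omega), mul_zero]
    · rw [if_neg h]
      apply Finset.sum_eq_zero
      intro k hk
      rw [Finset.mem_Icc] at hk
      rw [if_neg (by omega), mul_zero]
  have hS2 : ∑ k ∈ Finset.Icc 1 (N - b*m),
      coeff (R := R) (b*m+k) D * (((b*m+k : ℕ) : R) * coeff (R := R) (N - (b*m+k) + 1) g)
      = ∑ k ∈ Finset.Icc 1 (N - b*m),
      coeff (R := R) (b*m+k) D * ((b*m+k : ℕ) : R) * coeff (R := R) (N - (b*m+k) + 1) g := by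
    apply Finset.sum_congr rfl
    intro k _
    rw [mul_assoc]
  rw [hS1, hS3, hS2]
  abel

/-- generalized matrix recurrence for the first `b+1` nontrivial coefficients
`A_{n,m} = coeff_{bm+n}(Δ_m)` of the iterated differences of
`f(X) = X + ∑_{i≥1} a_i X^{i+b}`. -/
theorem stmt18 {p : ℕ} (hp : p.Prime) (hodd : p ≠ 2) (b : ℕ) (hb : 1 ≤ b)
    (f : PowerSeries (ZMod p))
    (hf0 : PowerSeries.coeff (R := ZMod p) 0 f = 0)
    (hf1 : PowerSeries.coeff (R := ZMod p) 1 f = 1)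
    (hfb : ∀ i, 2 ≤ i → i ≤ b → PowerSeries.coeff (R := ZMod p) i f = 0)
    (a : ℕ → ZMod p) (ha : ∀ i, a i = PowerSeries.coeff (R := ZMod p) (i + b) f)
    (Δ : ℕ → PowerSeries (ZMod p))
    (hΔ1 : Δ 1 = f - PowerSeries.X)
    (hΔs : ∀ m ≥ 1, Δ (m + 1) = PowerSeries.comp (Δ m) f - Δ m)
    (A : ℕ → ℕ → ZMod p)
    (hA : ∀ n m, A n m = PowerSeries.coeff (R := ZMod p) (b * m + n) (Δ m)) :
    (∀ n, 1 ≤ n → n ≤ b + 1 → A n 1 = a n) ∧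
    (∀ m ≥ 1, ∀ j, 1 ≤ j → j ≤ b →
      A j (m + 1) = ∑ k ∈ Finset.Icc 1 j,
        a (j - k + 1) * ((b * m + k : ℕ) : ZMod p) * A k m) ∧
    (∀ m ≥ 1,
      A (b + 1) (m + 1)
        = ((a 1) ^ 2 * (((b * m + 1).choose 2 : ℕ) : ZMod p)
            + a (b + 1) * ((b * m + 1 : ℕ) : ZMod p)) * A 1 m
          + ∑ k ∈ Finset.Icc 2 (b + 1),
              a (b + 2 - k) * ((b * m + k : ℕ) : ZMod p) * A k m) := by
  set g := f - PowerSeries.X with hgdef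
  have hfg : f = PowerSeries.X + g := by rw [hgdef]; ring
  have hg : ∀ j ≤ b, PowerSeries.coeff (R := ZMod p) j g = 0 := by
    intro j hj
    rw [hgdef, map_sub, PowerSeries.coeff_X]
    rcases j with _ | _ | i
    · rw [hf0, if_neg (by omega)]; ring
    · rw [hf1, if_pos rfl]; ring
    · rw [hfb (i+2) (by omega) hj, if_neg (by omega)]; ring
  have hgcoeff : ∀ i, 1 ≤ i → PowerSeries.coeff (R := ZMod p) (i + b) g = a i := by
    intro i hi
    rw [hgdef, map_sub, PowerSeries.coeff_X, if_neg (by omega), sub_zero]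
    exact (ha i).symm
  have hval : ∀ m, 1 ≤ m → ∀ i ≤ b*m, PowerSeries.coeff (R := ZMod p) i (Δ m) = 0 := by
    intro m hm
    induction m, hm using Nat.le_induction with
    | base =>
      intro i hi
      have : Δ 1 = g := by rw [hΔ1, hgdef]
      rw [this]
      exact hg i (by omega)
    | succ m hm ih =>
      intro i hi
      have hbm : b*(m+1) = b*m + b := by ring
      rw [hΔs m hm, hfg, aux_master hb hg ih i (by omega)]
      rw [Finset.sum_eq_zero ?_, if_neg (by omega), add_zero]
      intro k hk
      rw [Finset.mem_Icc] at hk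
      rw [hg (i - (b*m+k) + 1) (by omega), mul_zero]
  refine ⟨?_, ?_, ?_⟩
  · intro n hn _
    rw [hA, hΔ1, show b*1 + n = n + b by omega]
    exact hgcoeff n hn
  · intro m hm j hj1 hjb
    have hbm : b*(m+1) = b*m + b := by ring
    simp only [hA]
    rw [hΔs m hm, hfg, aux_master hb hg (hval m hm) _ (by omega)]
    rw [if_neg (by omega), add_zero, show b*(m+1)+j - b*m = b + j by omega]
    have hrestr : ∑ k ∈ Finset.Icc 1 (b+j),
        PowerSeries.coeff (R := ZMod p) (b*m+k) (Δ m) * ((b*m+k : ℕ) : ZMod p)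
          * PowerSeries.coeff (R := ZMod p) (b*(m+1)+j - (b*m+k) + 1) g
        = ∑ k ∈ Finset.Icc 1 j,
        PowerSeries.coeff (R := ZMod p) (b*m+k) (Δ m) * ((b*m+k : ℕ) : ZMod p)
          * PowerSeries.coeff (R := ZMod p) (b*(m+1)+j - (b*m+k) + 1) g := by
      symm
      apply Finset.sum_subset (Finset.Icc_subset_Icc_right (by omega))
      intro k hk hk'
      rw [Finset.mem_Icc] at hk hk'
      rw [hg (b*(m+1)+j - (b*m+k) + 1) (by omega), mul_zero]
    rw [hrestr]
    apply Finset.sum_congr rfl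
    intro k hk
    rw [Finset.mem_Icc] at hk
    rw [show b*(m+1)+j - (b*m+k) + 1 = (j - k + 1) + b by omega,
      hgcoeff (j - k + 1) (by omega)]
    ring
  · intro m hm
    have hbm : b*(m+1) = b*m + b := by ring
    simp only [hA]
    rw [hΔs m hm, hfg, aux_master hb hg (hval m hm) _ (by omega)]
    rw [if_pos (by omega), show b*(m+1)+(b+1) - b*m = 2*b + 1 by omega]
    have hrestr : ∑ k ∈ Finset.Icc 1 (2*b+1),
        PowerSeries.coeff (R := ZMod p) (b*m+k) (Δ m) * ((b*m+k : ℕ) : ZMod p)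
          * PowerSeries.coeff (R := ZMod p) (b*(m+1)+(b+1) - (b*m+k) + 1) g
        = ∑ k ∈ Finset.Icc 1 (b+1),
        PowerSeries.coeff (R := ZMod p) (b*m+k) (Δ m) * ((b*m+k : ℕ) : ZMod p)
          * PowerSeries.coeff (R := ZMod p) (b*(m+1)+(b+1) - (b*m+k) + 1) g := by
      symm
      apply Finset.sum_subset (Finset.Icc_subset_Icc_right (by omega))
      intro k hk hk'
      rw [Finset.mem_Icc] at hk hk'
      rw [hg (b*(m+1)+(b+1) - (b*m+k) + 1) (by omega), mul_zero]
    rw [hrestr]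
    have hconv : ∑ k ∈ Finset.Icc 1 (b+1),
        PowerSeries.coeff (R := ZMod p) (b*m+k) (Δ m) * ((b*m+k : ℕ) : ZMod p)
          * PowerSeries.coeff (R := ZMod p) (b*(m+1)+(b+1) - (b*m+k) + 1) g
        = ∑ k ∈ Finset.Icc 1 (b+1),
        a (b + 2 - k) * ((b*m+k : ℕ) : ZMod p)
          * PowerSeries.coeff (R := ZMod p) (b*m+k) (Δ m) := by
      apply Finset.sum_congr rfl
      intro k hk
      rw [Finset.mem_Icc] at hk
      rw [show b*(m+1)+(b+1) - (b*m+k) + 1 = (b + 2 - k) + b by omega,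
        hgcoeff (b + 2 - k) (by omega)]
      ring
    rw [hconv]
    have hsplit : Finset.Icc 1 (b+1) = insert 1 (Finset.Icc 2 (b+1)) := by
      ext x
      simp only [Finset.mem_Icc, Finset.mem_insert]
      omega
    rw [hsplit, Finset.sum_insert (by simp [Finset.mem_Icc])]
    rw [show b + 2 - 1 = b + 1 by omega]
    have ha1 : PowerSeries.coeff (R := ZMod p) (b+1) g = a 1 := by
      rw [show b + 1 = 1 + b by omega]; exact hgcoeff 1 le_rfl
    rw [ha1]
    ring
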